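/- Let D be a domain in ℝ^n, n ≥ 2, let p > n−1, and let f : D → ℝ̄^n be an open, discrete ring (p,Q)-mapping with Q ∈ L¹_loc(D) and ∞ ∉ f(D). Fix a point x ∈ D and ε > 0 with B(x,2ε) ⊂ D, let E = (B(x,2ε), closure of B(x,ε)), and let Γ_E be the family of all paths γ : [a,b) → B(x,2ε) with γ(a) ∈ closure of B(x,ε) and |γ| ∩ (B(x,2ε)∖F) ≠ ∅ for every compact F ⊂ B(x,2ε). Then M_p(fΓ_E) ≤ ε^{−p} ∫_{B(x,2ε)} Q(y) dm(y). -/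

import Mathlib

open MeasureTheory Metric Set Filter Topology
open scoped ENNReal NNReal Classical

noncomputable section

/-- Euclidean space `ℝⁿ`. -/
abbrev Eucl (n : ℕ) : Type := EuclideanSpace ℝ (Fin n)

/-- Projection from the one-point compactification `ℝ̄ⁿ = ℝⁿ ∪ {∞}` back to `ℝⁿ`,
sending the point `∞` to the junk value `0`. -/
def opProj {X : Type*} [Zero X] (y : OnePoint X) : X := Option.getD y 0

/-- The point of the curve `γ` (defined on the parameter set `s ⊆ ℝ`) lying at
arclength `u` from its beginning: the arclength parametrization of `γ`. -/
def arcParamOn {X : Type*} [PseudoEMetricSpace X] (γ : ℝ → X) (s : Set ℝ) (u : ℝ) : X :=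
  γ (sInf {t | t ∈ s ∧ ENNReal.ofReal u ≤ eVariationOn γ (s ∩ Set.Iic t)})

/-- The line integral `∫_γ ρ ds` of a Borel function `ρ : ℝⁿ → [0,∞]` along a curve
`γ` defined on the parameter set `s ⊆ ℝ`, computed via the arclength parametrization.
By the standard convention, the line integral along a non-rectifiable curve is `∞`. -/
def lineIntegral {X : Type*} [PseudoEMetricSpace X] (ρ : X → ℝ≥0∞) (s : Set ℝ)
    (γ : ℝ → X) : ℝ≥0∞ :=
  if eVariationOn γ s = ∞ then ∞
  else ∫⁻ u in Set.Icc 0 (eVariationOn γ s).toReal, ρ (arcParamOn γ s u)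

/-- Line integral of `ρ : ℝⁿ → [0,∞]` along a curve into `ℝ̄ⁿ`; a curve passing
through `∞` is treated as non-rectifiable, i.e. the integral is `∞`. -/
def lineIntegralOP {n : ℕ} (ρ : Eucl n → ℝ≥0∞) (s : Set ℝ)
    (γ : ℝ → OnePoint (Eucl n)) : ℝ≥0∞ :=
  if ∀ t ∈ s, γ t ≠ OnePoint.infty then lineIntegral ρ s (fun t => opProj (γ t)) else ∞

/-- A curve, recorded as its parameter set (an interval in `ℝ`) together with the map. -/
abbrev Curve (X : Type*) := Set ℝ × (ℝ → X)

/-- A Borel function `ρ : ℝⁿ → [0,∞]` is admissible for a family `Γ` of curves in `ℝ̄ⁿ`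
if `∫_γ ρ ds ≥ 1` for every `γ ∈ Γ`. -/
def IsAdmissible {n : ℕ} (ρ : Eucl n → ℝ≥0∞) (Γ : Set (Curve (OnePoint (Eucl n)))) : Prop :=
  Measurable ρ ∧ ∀ c ∈ Γ, 1 ≤ lineIntegralOP ρ c.1 c.2

/-- The `p`-modulus `M_p(Γ)` of a family of curves in `ℝ̄ⁿ`:
`M_p(Γ) = inf ∫ ρ(x)^p dm(x)` over all admissible `ρ`. -/
def modulus {n : ℕ} (p : ℝ) (Γ : Set (Curve (OnePoint (Eucl n)))) : ℝ≥0∞ :=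
  ⨅ (ρ : Eucl n → ℝ≥0∞) (_ : IsAdmissible ρ Γ), ∫⁻ x, ρ x ^ p

/-- The family `Γ(S₁,S₂,A)` of all curves joining `S₁` and `S₂` in `A`:
`γ : [a,b] → ℝⁿ` with `γ a ∈ S₁`, `γ b ∈ S₂` and `γ t ∈ A` for `a < t < b`. -/
def joinFam {n : ℕ} (S₁ S₂ A : Set (Eucl n)) : Set (Curve (Eucl n)) :=
  {c | ∃ a b : ℝ, a < b ∧ c.1 = Set.Icc a b ∧ ContinuousOn c.2 (Set.Icc a b) ∧
    c.2 a ∈ S₁ ∧ c.2 b ∈ S₂ ∧ ∀ t ∈ Set.Ioo a b, c.2 t ∈ A}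

/-- The image family `fΓ = {f ∘ γ : γ ∈ Γ}`. -/
def imageFam {n : ℕ} (f : Eucl n → OnePoint (Eucl n)) (Γ : Set (Curve (Eucl n))) :
    Set (Curve (OnePoint (Eucl n))) :=
  {c | ∃ g ∈ Γ, c = (g.1, fun t => f (g.2 t))}

/-- The spherical annulus (ring) `A(r₁,r₂,x₀) = {x : r₁ < |x-x₀| < r₂}`. -/
def ann {n : ℕ} (x₀ : Eucl n) (r₁ r₂ : ℝ) : Set (Eucl n) :=
  {x | r₁ < dist x x₀ ∧ dist x x₀ < r₂}

/-- `f : D → ℝ̄ⁿ` is a ring `(p,Q)`-mapping: `f` is continuous on `D` and for every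
`x₀ ∈ D`, all radii `0 < r₁ < r₂ < dist(x₀, ∂D)` and every measurable
`η : (r₁,r₂) → [0,∞]` with `∫_{r₁}^{r₂} η(r) dr ≥ 1`, one has
`M_p(f(Γ(S₁,S₂,A))) ≤ ∫_A Q(x) η(|x-x₀|)^p dm(x)`. -/
def IsRingMapping {n : ℕ} (p : ℝ) (D : Set (Eucl n)) (Q : Eucl n → ℝ≥0∞)
    (f : Eucl n → OnePoint (Eucl n)) : Prop :=
  ContinuousOn f D ∧
  ∀ x₀ ∈ D, ∀ r₁ r₂ : ℝ, 0 < r₁ → r₁ < r₂ →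
    ENNReal.ofReal r₂ < EMetric.infEdist x₀ Dᶜ →
    ∀ η : ℝ → ℝ≥0∞, Measurable η → 1 ≤ ∫⁻ r in Set.Ioo r₁ r₂, η r →
      modulus p (imageFam f
          (joinFam (Metric.sphere x₀ r₁) (Metric.sphere x₀ r₂) (ann x₀ r₁ r₂)))
        ≤ ∫⁻ x in ann x₀ r₁ r₂, Q x * η (dist x x₀) ^ p

/-- `f` is discrete on `D`: every fiber `f⁻¹(y)` consists of isolated points. -/
def DiscreteOn {X Y : Type*} [TopologicalSpace X] (f : X → Y) (D : Set X) : Prop :=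
  ∀ y : Y, ∀ x ∈ D, f x = y → ∃ U ∈ 𝓝 x, ∀ z ∈ U, z ∈ D → f z = y → z = x

/-- `f` is open on `D`: images of open subsets of `D` are open. -/
def OpenOn {X Y : Type*} [TopologicalSpace X] [TopologicalSpace Y]
    (f : X → Y) (D : Set X) : Prop :=
  ∀ U ⊆ D, IsOpen U → IsOpen (f '' U)

/-- `Q ∈ L¹_loc(D)` for `Q : D → [0,∞]`. -/
def LocIntOn {n : ℕ} (Q : Eucl n → ℝ≥0∞) (D : Set (Eucl n)) : Prop :=
  Measurable Q ∧ ∀ K ⊆ D, IsCompact K → ∫⁻ x in K, Q x ≠ ∞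

/-- `h : [a,b] → F` is absolutely continuous: for every `ε > 0` there is `δ > 0` such
that for any finite collection of mutually non-overlapping subintervals
`[uᵢ,vᵢ] ⊆ [a,b]` of total length `< δ` one has `Σ ‖h(vᵢ) - h(uᵢ)‖ < ε`. -/
def AbsContOnInt {F : Type*} [NormedAddCommGroup F] (h : ℝ → F) (a b : ℝ) : Prop :=
  ∀ ε : ℝ, 0 < ε → ∃ δ : ℝ, 0 < δ ∧ ∀ k : ℕ, ∀ u v : Fin k → ℝ,
    (∀ i, a ≤ u i ∧ u i ≤ v i ∧ v i ≤ b) →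
    (Pairwise fun i j => Disjoint (Set.Ioo (u i) (v i)) (Set.Ioo (u j) (v j))) →
    (∑ i, (v i - u i)) < δ → (∑ i, ‖h (v i) - h (u i)‖) < ε

/-- The closed coordinate box with corners `lo`, `hi`. -/
def box {n : ℕ} (lo hi : Eucl n) : Set (Eucl n) :=
  {x : Eucl n | ∀ i, lo i ≤ x i ∧ x i ≤ hi i}

/-- `u` is `ACL` (absolutely continuous on lines) on the open set `A ⊆ ℝⁿ`: for every
closed coordinate box contained in `A` and every coordinate direction `j`,
`u` is absolutely continuous on almost every line segment of the box parallel to the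
`j`-th axis. -/
def ACLOn {n : ℕ} {F : Type*} [NormedAddCommGroup F] (u : Eucl n → F)
    (A : Set (Eucl n)) : Prop :=
  ∀ lo hi : Eucl n, (∀ i, lo i < hi i) → box lo hi ⊆ A →
    ∀ j : Fin n, ∀ᵐ x ∂(volume : Measure (Eucl n)), x ∈ box lo hi →
      AbsContOnInt (fun t => u (WithLp.toLp 2 (Function.update x j t))) (lo j) (hi j)

/-- The `p`-capacity of a condenser `(A, C)`:
`cap_p(A,C) = inf ∫_A |∇u|^p dm` over all nonnegative continuous `ACL` functions
`u` on `A` with `u ≥ 1` on `C`. -/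
def pCapacity {n : ℕ} (p : ℝ) (A C : Set (Eucl n)) : ℝ≥0∞ :=
  ⨅ (u : Eucl n → ℝ) (_ : ContinuousOn u A ∧ (∀ x ∈ A, 0 ≤ u x) ∧
      (∀ x ∈ C, 1 ≤ u x) ∧ ACLOn u A),
    ∫⁻ x in A, ENNReal.ofReal (‖fderiv ℝ u x‖ ^ p)


/-- The family `Γ_E` associated to the condenser `E = (B(x,2ε), closure B(x,ε))`:
all curves `γ : [a,b) → B(x,2ε)` with `γ(a) ∈ closure B(x,ε)` which leave every
compact subset of `B(x,2ε)`. -/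
def gammaE {n : ℕ} (x : Eucl n) (ε : ℝ) : Set (Curve (Eucl n)) :=
  {c | ∃ a b : ℝ, a < b ∧ c.1 = Set.Ico a b ∧ ContinuousOn c.2 (Set.Ico a b) ∧
    c.2 a ∈ Metric.closedBall x ε ∧
    Set.MapsTo c.2 (Set.Ico a b) (Metric.ball x (2 * ε)) ∧
    ∀ F : Set (Eucl n), IsCompact F → F ⊆ Metric.ball x (2 * ε) →
      ¬ (c.2 '' Set.Ico a b ⊆ F)}

lemma eVar_split {X : Type*} [PseudoEMetricSpace X] (h : ℝ → X) (s : Set ℝ)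
    {a' τ : ℝ} (ha' : a' ∈ s) (hτ : a' ≤ τ) :
    eVariationOn h (s ∩ Set.Iic τ) =
      eVariationOn h (s ∩ Set.Iic a') + eVariationOn h (s ∩ Set.Icc a' τ) := by
  have hu : s ∩ Set.Iic τ = (s ∩ Set.Iic a') ∪ (s ∩ Set.Icc a' τ) := by
    ext y
    constructor
    · rintro ⟨hy, hyτ⟩
      rcases le_or_gt y a' with hy' | hy'
      · exact Or.inl ⟨hy, hy'⟩
      · exact Or.inr ⟨hy, hy'.le, hyτ⟩
    · rintro (⟨hy, hy'⟩ | ⟨hy, _, hy2⟩)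
      · exact ⟨hy, le_trans hy' hτ⟩
      · exact ⟨hy, hy2⟩
  have hgr : IsGreatest (s ∩ Set.Iic a') a' := ⟨⟨ha', le_refl a'⟩, fun y hy => hy.2⟩
  have hle : IsLeast (s ∩ Set.Icc a' τ) a' := ⟨⟨ha', le_refl a', hτ⟩, fun y hy => hy.2.1⟩
  rw [hu, eVariationOn.union h hgr hle]

lemma lineIntegral_inter_Icc_le {X : Type*} [PseudoEMetricSpace X] (ρ : X → ℝ≥0∞)
    (h : ℝ → X) (s : Set ℝ) {a' b' : ℝ} (ha' : a' ∈ s) (hb' : b' ∈ s) (hab : a' ≤ b') :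
    lineIntegral ρ (s ∩ Set.Icc a' b') h ≤ lineIntegral ρ s h := by
  by_cases hV : eVariationOn h s = ∞
  · simp [lineIntegral, hV]
  set s' := s ∩ Set.Icc a' b' with hs'def
  have hsub : s' ⊆ s := Set.inter_subset_left
  have hV' : eVariationOn h s' ≠ ∞ :=
    fun e => hV (top_unique (e ▸ eVariationOn.mono h hsub))
  set V := eVariationOn h s with hVdef
  set V' := eVariationOn h s' with hV'def
  set c := eVariationOn h (s ∩ Set.Iic a') with hcdef
  have hcV : c ≤ V := eVariationOn.mono h Set.inter_subset_left
  have hcne : c ≠ ∞ := fun e => hV (top_unique (e ▸ hcV))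
  have hset : ∀ τ : ℝ, τ ≤ b' → s' ∩ Set.Iic τ = s ∩ Set.Icc a' τ := by
    intro τ hτ
    ext y
    constructor
    · rintro ⟨⟨hy, hy1, _⟩, hy3⟩; exact ⟨hy, hy1, hy3⟩
    · rintro ⟨hy, hy1, hy2⟩; exact ⟨⟨hy, hy1, hy2.trans hτ⟩, hy2⟩
  have hsplit : ∀ τ : ℝ, a' ≤ τ → τ ≤ b' →
      eVariationOn h (s ∩ Set.Iic τ) = c + eVariationOn h (s' ∩ Set.Iic τ) := by
    intro τ h1 h2
    rw [hset τ h2, hcdef, ← eVar_split h s ha' h1]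
  have hs'b : s' ∩ Set.Iic b' = s' := Set.inter_eq_left.2 fun y hy => hy.2.2
  have hc_addV' : c + V' ≤ V := by
    calc c + V' = eVariationOn h (s ∩ Set.Iic b') := by
          rw [hsplit b' hab le_rfl, hs'b]
      _ ≤ V := eVariationOn.mono h Set.inter_subset_left
  have hpoint : ∀ u : ℝ, 0 < u → u ≤ V'.toReal →
      arcParamOn h s' u = arcParamOn h s (u + c.toReal) := by
    intro u hu huV
    have hofu : (0 : ℝ≥0∞) < ENNReal.ofReal u := ENNReal.ofReal_pos.2 hu
    have hofadd : ENNReal.ofReal (u + c.toReal) = ENNReal.ofReal u + c := by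
      rw [ENNReal.ofReal_add hu.le ENNReal.toReal_nonneg, ENNReal.ofReal_toReal hcne]
    set T' := {τ | τ ∈ s' ∧ ENNReal.ofReal u ≤ eVariationOn h (s' ∩ Set.Iic τ)} with hT'
    set T := {τ | τ ∈ s ∧ ENNReal.ofReal (u + c.toReal) ≤ eVariationOn h (s ∩ Set.Iic τ)}
      with hT
    have hb'T' : b' ∈ T' := by
      refine ⟨⟨hb', hab, le_rfl⟩, ?_⟩
      rw [hs'b]
      exact (ENNReal.ofReal_le_iff_le_toReal hV').2 huV
    have hT'subT : T' ⊆ T := by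
      rintro τ ⟨hτs', hτv⟩
      refine ⟨hsub hτs', ?_⟩
      rw [hofadd, hsplit τ hτs'.2.1 hτs'.2.2, add_comm (ENNReal.ofReal u) c]
      exact add_le_add le_rfl hτv
    have hTlow : ∀ τ ∈ T, a' ≤ τ := by
      rintro τ ⟨hτs, hτv⟩
      by_contra hlt
      push_neg at hlt
      have h1 : eVariationOn h (s ∩ Set.Iic τ) ≤ c :=
        eVariationOn.mono h (Set.inter_subset_inter_right s (Set.Iic_subset_Iic.2 hlt.le))
      have h2 : c < ENNReal.ofReal (u + c.toReal) := by
        rw [hofadd, add_comm]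
        exact ENNReal.lt_add_right hcne (ne_of_gt hofu)
      exact absurd (hτv.trans h1) (not_le.2 h2)
    have hTsub : ∀ τ ∈ T, τ ≤ b' → τ ∈ T' := by
      rintro τ ⟨hτs, hτv⟩ hτb
      have hτa : a' ≤ τ := hTlow τ ⟨hτs, hτv⟩
      refine ⟨⟨hτs, hτa, hτb⟩, ?_⟩
      rw [hofadd, hsplit τ hτa hτb, add_comm (ENNReal.ofReal u) c] at hτv
      exact (ENNReal.add_le_add_iff_left hcne).1 hτv
    have hInf : sInf T = sInf T' := by
      have hT'ne : T'.Nonempty := ⟨b', hb'T'⟩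
      have hTne : T.Nonempty := ⟨b', hT'subT hb'T'⟩
      have hbdd : BddBelow T := ⟨a', fun τ hτ => hTlow τ hτ⟩
      have hbdd' : BddBelow T' := hbdd.mono hT'subT
      apply le_antisymm
      · exact csInf_le_csInf hbdd hT'ne hT'subT
      · apply le_csInf hTne
        intro τ hτ
        rcases le_or_gt τ b' with hτb | hτb
        · exact csInf_le hbdd' (hTsub τ hτ hτb)
        · exact (csInf_le hbdd' hb'T').trans hτb.le
    show h (sInf T') = h (sInf T)
    rw [hInf]
  -- compare integrals
  rw [lineIntegral, lineIntegral, if_neg hV', if_neg hV]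
  set g : ℝ → ℝ≥0∞ := fun v => ρ (arcParamOn h s v) with hg
  have hc0 : (0:ℝ) ≤ c.toReal := ENNReal.toReal_nonneg
  calc ∫⁻ u in Set.Icc 0 V'.toReal, ρ (arcParamOn h s' u)
      = ∫⁻ u in Set.Ioc 0 V'.toReal, ρ (arcParamOn h s' u) :=
        (setLIntegral_congr (Ioc_ae_eq_Icc)).symm
    _ = ∫⁻ u in Set.Ioc 0 V'.toReal, g (u + c.toReal) := by
        apply setLIntegral_congr_fun measurableSet_Ioc
        intro u hu
        show ρ (arcParamOn h s' u) = g (u + c.toReal)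
        rw [hpoint u hu.1 hu.2]
    _ = ∫⁻ v in Set.Ioc c.toReal (c.toReal + V'.toReal), g v := by
        rw [← lintegral_indicator measurableSet_Ioc, ← lintegral_indicator measurableSet_Ioc]
        rw [← lintegral_add_right_eq_self
          (fun v => (Set.Ioc c.toReal (c.toReal + V'.toReal)).indicator g v) c.toReal]
        apply lintegral_congr
        intro u
        by_cases hu : u ∈ Set.Ioc 0 V'.toReal
        · rw [Set.indicator_of_mem hu, Set.indicator_of_mem (by
            constructor
            · linarith [hu.1]
            · linarith [hu.2])]
        · rw [Set.indicator_of_notMem hu, Set.indicator_of_notMem (by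
            intro hmem
            exact hu ⟨by linarith [hmem.1], by linarith [hmem.2]⟩)]
    _ ≤ ∫⁻ v in Set.Icc 0 V.toReal, g v := by
        apply lintegral_mono_set
        intro v hv
        have h1 : c.toReal + V'.toReal ≤ V.toReal := by
          rw [← ENNReal.toReal_add hcne hV']
          exact ENNReal.toReal_mono hV hc_addV'
        exact ⟨le_trans hc0 hv.1.le, hv.2.trans h1⟩

lemma gammaE_subcurve {n : ℕ} (x : Eucl n) {ε t : ℝ} (hε : 0 < ε) (hεt : ε < t)
    (ht2 : t < 2 * ε) {c : Curve (Eucl n)} (hc : c ∈ gammaE x ε) :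
    ∃ a b a' b' : ℝ, a ≤ a' ∧ a' < b' ∧ b' < b ∧ c.1 = Set.Ico a b ∧
      Set.MapsTo c.2 (Set.Ico a b) (Metric.ball x (2 * ε)) ∧
      (Set.Icc a' b', c.2) ∈ joinFam (Metric.sphere x ε) (Metric.sphere x t) (ann x ε t) := by
  obtain ⟨a, b, hab, h1, hcont, hstart, hmaps, hleave⟩ := hc
  set γ := c.2 with hγ
  set g : ℝ → ℝ := fun s => dist (γ s) x with hgdef
  have hnot := hleave (Metric.closedBall x t) (isCompact_closedBall x t)
      (Metric.closedBall_subset_ball ht2)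
  rw [Set.not_subset] at hnot
  obtain ⟨y, hy, hyF⟩ := hnot
  obtain ⟨s₀, hs₀, rfl⟩ := hy
  have hgs₀ : t < g s₀ := by
    simpa [hgdef, Metric.mem_closedBall, not_le] using hyF
  have hs₀b : s₀ < b := hs₀.2
  have has₀ : a ≤ s₀ := hs₀.1
  have hcg : ContinuousOn g (Set.Ico a b) :=
    (Continuous.dist continuous_id continuous_const).comp_continuousOn hcont
  have hga : g a ≤ ε := Metric.mem_closedBall.1 hstart
  set S1 := {s | s ∈ Set.Icc a s₀ ∧ g s = t} with hS1
  have hIccsub : Set.Icc a s₀ ⊆ Set.Ico a b := fun s hs => ⟨hs.1, lt_of_le_of_lt hs.2 hs₀b⟩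
  have hcg1 : ContinuousOn g (Set.Icc a s₀) := hcg.mono hIccsub
  have hS1ne : S1.Nonempty := by
    obtain ⟨w, hw, hgw⟩ := intermediate_value_Icc has₀ hcg1 ⟨by linarith, hgs₀.le⟩
    exact ⟨w, hw, hgw⟩
  have hS1closed : IsClosed S1 := by
    have : S1 = Set.Icc a s₀ ∩ g ⁻¹' {t} := by
      ext s; simp [hS1, Set.mem_setOf_eq]
    rw [this]
    exact hcg1.preimage_isClosed_of_isClosed isClosed_Icc isClosed_singleton
  set b' := sInf S1 with hb'def
  have hbdd1 : BddBelow S1 := ⟨a, fun s hs => hs.1.1⟩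
  have hb'S1 : b' ∈ S1 := hS1closed.csInf_mem hS1ne hbdd1
  have hb'min : ∀ s ∈ S1, b' ≤ s := fun s hs => csInf_le hbdd1 hs
  have hgb' : g b' = t := hb'S1.2
  have hab' : a < b' := by
    rcases eq_or_lt_of_le hb'S1.1.1 with h | h
    · rw [← h] at hgb'; linarith
    · exact h
  have hclaim1 : ∀ s ∈ Set.Ico a b', g s < t := by
    rintro s ⟨has, hsb'⟩
    by_contra hge
    push_neg at hge
    have hsub2 : Set.Icc a s ⊆ Set.Icc a s₀ :=
      Set.Icc_subset_Icc le_rfl (le_trans hsb'.le hb'S1.1.2)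
    obtain ⟨w, hw, hgw⟩ := intermediate_value_Icc has (hcg1.mono hsub2) ⟨by linarith, hge⟩
    have := hb'min w ⟨hsub2 hw, hgw⟩
    linarith [hw.2]
  set S2 := {s | s ∈ Set.Icc a b' ∧ g s = ε} with hS2
  have hsubIccb' : Set.Icc a b' ⊆ Set.Icc a s₀ := Set.Icc_subset_Icc le_rfl hb'S1.1.2
  have hcg2 : ContinuousOn g (Set.Icc a b') := hcg1.mono hsubIccb'
  have hS2ne : S2.Nonempty := by
    obtain ⟨w, hw, hgw⟩ := intermediate_value_Icc hab'.le hcg2 ⟨hga, by rw [hgb']; linarith⟩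
    exact ⟨w, hw, hgw⟩
  have hS2closed : IsClosed S2 := by
    have : S2 = Set.Icc a b' ∩ g ⁻¹' {ε} := by
      ext s; simp [hS2, Set.mem_setOf_eq]
    rw [this]
    exact hcg2.preimage_isClosed_of_isClosed isClosed_Icc isClosed_singleton
  set a' := sSup S2 with ha'def
  have hbdd2 : BddAbove S2 := ⟨b', fun s hs => hs.1.2⟩
  have ha'S2 : a' ∈ S2 := hS2closed.csSup_mem hS2ne hbdd2
  have ha'max : ∀ s ∈ S2, s ≤ a' := fun s hs => le_csSup hbdd2 hs
  have hga' : g a' = ε := ha'S2.2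
  have ha'b' : a' < b' := by
    rcases eq_or_lt_of_le ha'S2.1.2 with h | h
    · rw [h, hgb'] at hga'; linarith
    · exact h
  have hclaim2 : ∀ s ∈ Set.Ioc a' b', ε < g s := by
    rintro s ⟨ha's, hsb'⟩
    by_contra hge
    push_neg at hge
    have hssub : Set.Icc s b' ⊆ Set.Icc a b' :=
      Set.Icc_subset_Icc (ha'S2.1.1.trans ha's.le) le_rfl
    obtain ⟨w, hw, hgw⟩ :=
      intermediate_value_Icc hsb' (hcg2.mono hssub) ⟨hge, by rw [hgb']; linarith⟩
    have := ha'max w ⟨hssub hw, hgw⟩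
    linarith [hw.1]
  have hb'b : b' < b := lt_of_le_of_lt hb'S1.1.2 hs₀b
  have hIccsub' : Set.Icc a' b' ⊆ Set.Ico a b :=
    fun s hs => ⟨ha'S2.1.1.trans hs.1, lt_of_le_of_lt hs.2 hb'b⟩
  refine ⟨a, b, a', b', ha'S2.1.1, ha'b', hb'b, h1, hmaps, ?_⟩
  refine ⟨a', b', ha'b', rfl, hcont.mono hIccsub', ?_, ?_, ?_⟩
  · exact Metric.mem_sphere.2 hga'
  · exact Metric.mem_sphere.2 hgb'
  · rintro s ⟨hs1, hs2⟩
    exact ⟨hclaim2 s ⟨hs1, hs2.le⟩, hclaim1 s ⟨ha'S2.1.1.trans hs1.le, hs2⟩⟩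

/-- **Modulus estimate (3.6).** Let `D ⊆ ℝⁿ`, `n ≥ 2`, be a domain, `p > n-1`, and
`f : D → ℝ̄ⁿ` an open discrete ring `(p,Q)`-mapping with `Q ∈ L¹_loc(D)`, `∞ ∉ f(D)`.
Then for `x ∈ D` and `ε > 0` with `B(x,2ε) ⊆ D`,
`M_p(fΓ_E) ≤ ε⁻ᵖ ∫_{B(x,2ε)} Q dm`. -/
theorem modulus_gammaE_le_of_ringMapping (n : ℕ) (hn : 2 ≤ n) (p : ℝ)
    (hp : (n : ℝ) - 1 < p) (D : Set (Eucl n)) (hD : IsOpen D) (hDconn : IsConnected D)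
    (Q : Eucl n → ℝ≥0∞) (hQ : LocIntOn Q D)
    (f : Eucl n → OnePoint (Eucl n)) (hring : IsRingMapping p D Q f)
    (hdisc : DiscreteOn f D) (hopen : OpenOn f D)
    (hinf : ∀ x ∈ D, f x ≠ OnePoint.infty)
    (x : Eucl n) (hx : x ∈ D) (ε : ℝ) (hε : 0 < ε)
    (hball : Metric.ball x (2 * ε) ⊆ D) :
    modulus p (imageFam f (gammaE x ε)) ≤
      (∫⁻ y in Metric.ball x (2 * ε), Q y) / ENNReal.ofReal (ε ^ p) := by
  set I := ∫⁻ y in Metric.ball x (2 * ε), Q y with hIdef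
  set M := modulus p (imageFam f (gammaE x ε)) with hMdef
  -- key estimate for every t ∈ (ε, 2ε)
  have key : ∀ t ∈ Set.Ioo ε (2 * ε), M ≤ ENNReal.ofReal ((t - ε)⁻¹ ^ p) * I := by
    rintro t ⟨hεt, ht2⟩
    have htε : (0:ℝ) < t - ε := by linarith
    -- Step 1: modulus monotonicity via subcurves
    have step1 : M ≤ modulus p (imageFam f
        (joinFam (Metric.sphere x ε) (Metric.sphere x t) (ann x ε t))) := by
      refine le_iInf fun ρ => le_iInf fun hρ => ?_
      refine iInf₂_le ρ ⟨hρ.1, ?_⟩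
      rintro c ⟨g, hg, rfl⟩
      obtain ⟨a, b, a', b', haa', ha'b', hb'b, hg1, hmaps, hjoin⟩ :=
        gammaE_subcurve x hε hεt ht2 hg
      have h1 := hρ.2 (Set.Icc a' b', fun s => f (g.2 s)) ⟨(Set.Icc a' b', g.2), hjoin, rfl⟩
      have hD' : ∀ s ∈ Set.Ico a b, f (g.2 s) ≠ OnePoint.infty :=
        fun s hs => hinf _ (hball (hmaps hs))
      have hIccsub : Set.Icc a' b' ⊆ Set.Ico a b :=
        fun s hs => ⟨haa'.trans hs.1, lt_of_le_of_lt hs.2 hb'b⟩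
      have ha'mem : a' ∈ Set.Ico a b := hIccsub ⟨le_rfl, ha'b'.le⟩
      have hb'mem : b' ∈ Set.Ico a b := hIccsub ⟨ha'b'.le, le_rfl⟩
      refine le_trans h1 ?_
      show lineIntegralOP ρ (Set.Icc a' b') (fun s => f (g.2 s)) ≤
        lineIntegralOP ρ g.1 (fun s => f (g.2 s))
      rw [hg1, lineIntegralOP, lineIntegralOP,
        if_pos (fun s hs => hD' s (hIccsub hs)), if_pos hD']
      have heq : Set.Ico a b ∩ Set.Icc a' b' = Set.Icc a' b' := Set.inter_eq_right.2 hIccsub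
      have := lineIntegral_inter_Icc_le ρ (fun s => opProj (f (g.2 s))) (Set.Ico a b)
        ha'mem hb'mem ha'b'.le
      rwa [heq] at this
    -- Step 2: the ring inequality with constant η
    have hinfE : ENNReal.ofReal t < EMetric.infEdist x Dᶜ := by
      have h2ε : ENNReal.ofReal (2 * ε) ≤ EMetric.infEdist x Dᶜ := by
        refine (EMetric.le_infEdist).2 ?_
        intro y hy
        have hnm : ¬ y ∈ Metric.ball x (2 * ε) := fun hmem => hy (hball hmem)
        rw [Metric.mem_ball, not_lt] at hnm
        rw [edist_dist, dist_comm]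
        exact ENNReal.ofReal_le_ofReal hnm
      exact lt_of_lt_of_le ((ENNReal.ofReal_lt_ofReal_iff (by linarith)).2 ht2) h2ε
    have hηint : (1:ℝ≥0∞) ≤ ∫⁻ r in Set.Ioo ε t,
        (fun _ : ℝ => ENNReal.ofReal (t - ε)⁻¹) r := by
      rw [setLIntegral_const, Real.volume_Ioo,
        ← ENNReal.ofReal_mul (by positivity), inv_mul_cancel₀ (ne_of_gt htε)]
      simp
    have step2 := hring.2 x hx ε t hε hεt hinfE _ measurable_const hηint
    refine le_trans (le_trans step1 step2) ?_
    have hconst : ∀ y : Eucl n,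
        Q y * (fun _ : ℝ => ENNReal.ofReal (t - ε)⁻¹) (dist y x) ^ p
          = ENNReal.ofReal ((t - ε)⁻¹ ^ p) * Q y := by
      intro y
      rw [ENNReal.ofReal_rpow_of_pos (by positivity), mul_comm]
    calc ∫⁻ y in ann x ε t, Q y * (fun _ : ℝ => ENNReal.ofReal (t - ε)⁻¹) (dist y x) ^ p
        = ∫⁻ y in ann x ε t, ENNReal.ofReal ((t - ε)⁻¹ ^ p) * Q y :=
          lintegral_congr fun y => hconst y
      _ = ENNReal.ofReal ((t - ε)⁻¹ ^ p) * ∫⁻ y in ann x ε t, Q y :=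
          lintegral_const_mul' _ _ ENNReal.ofReal_ne_top
      _ ≤ ENNReal.ofReal ((t - ε)⁻¹ ^ p) * I := by
          apply mul_le_mul_right
          apply lintegral_mono_set
          rintro y ⟨hy1, hy2⟩
          exact Metric.mem_ball.2 (by linarith)
  -- conclude
  by_cases hI : I = ∞
  · rw [hI, ENNReal.top_div_of_ne_top ENNReal.ofReal_ne_top]
    exact le_top
  · have hεp : (0:ℝ) < ε ^ p := Real.rpow_pos_of_pos hε p
    have hlim : Filter.Tendsto (fun t : ℝ => ENNReal.ofReal ((t - ε)⁻¹ ^ p) * I)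
        (𝓝[<] (2 * ε)) (𝓝 (I / ENNReal.ofReal (ε ^ p))) := by
      have h1 : Filter.Tendsto (fun s : ℝ => s - ε) (𝓝 (2 * ε)) (𝓝 ε) := by
        have h0 : Filter.Tendsto (fun s : ℝ => s - ε) (𝓝 (2 * ε)) (𝓝 (2 * ε - ε)) :=
          (continuous_sub_right ε).tendsto _
        have he : 2 * ε - ε = ε := by ring
        rwa [he] at h0
      have h2 : Filter.Tendsto (fun s : ℝ => (s - ε)⁻¹ ^ p) (𝓝 (2 * ε)) (𝓝 (ε⁻¹ ^ p)) := by
        have hinv := h1.inv₀ (ne_of_gt hε)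
        exact (Real.continuousAt_rpow_const ε⁻¹ p
          (Or.inl (inv_ne_zero (ne_of_gt hε)))).tendsto.comp hinv
      have h3 : Filter.Tendsto (fun t : ℝ => ENNReal.ofReal ((t - ε)⁻¹ ^ p) * I)
          (𝓝 (2 * ε)) (𝓝 (ENNReal.ofReal (ε⁻¹ ^ p) * I)) :=
        ENNReal.Tendsto.mul_const (ENNReal.continuous_ofReal.tendsto _|>.comp h2)
          (Or.inr hI)
      have hval : ENNReal.ofReal (ε⁻¹ ^ p) * I = I / ENNReal.ofReal (ε ^ p) := by
        rw [Real.inv_rpow hε.le, ENNReal.ofReal_inv_of_pos hεp, ← ENNReal.div_eq_inv_mul]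
      rw [← hval]
      exact h3.mono_left nhdsWithin_le_nhds
    refine ge_of_tendsto hlim ?_
    filter_upwards [Ioo_mem_nhdsLT_of_mem (⟨by linarith, le_rfl⟩ : 2 * ε ∈ Set.Ioc ε (2 * ε))]
      with t ht
    exact key t ht

end
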